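/- Let X be a pointed metric space, Y a real Banach space, and 1 ≤ p < ∞. For every continuous linear functional y* ∈ Y*, every Lipschitz function f : X → ℝ with f(0) = 0, and every Y-valued molecule m on X, one has |Σ_{x∈X} f(x)·y*(m(x))| ≤ ‖y*‖ · Lip(f) · μ_p(m), where Lip(f) is the Lipschitz constant of f. -/

import Mathlib

/-!
STATEMENT 1: duality pairing bound for μ_p.

-/

open scoped BigOperators NNReal

noncomputable section

variable {X : Type*} [MetricSpace X] {Y : Type*} [NormedAddCommGroup Y] [NormedSpace ℝ Y]

/-- The atom `y·m_{x x'}`: the finitely supported function equal to `y` at `x`,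
`-y` at `x'` and `0` elsewhere. -/
def molAtom (x x' : X) (y : Y) : X →₀ Y :=
  Finsupp.single x y - Finsupp.single x' y

/-- The space `ℱ(X;Y)` of `Y`-valued molecules on `X`: finitely supported functions
`m : X → Y` whose values sum to `0`. -/
def MolSpace (X : Type*) (Y : Type*) [NormedAddCommGroup Y] [NormedSpace ℝ Y] :
    Submodule ℝ (X →₀ Y) :=
  LinearMap.ker (Finsupp.lsum ℝ fun _ : X => (LinearMap.id : Y →ₗ[ℝ] Y))

/-- `sup_{y* ∈ B_{Y*}} (Σ_i |y*(y_i)|^q)^{1/q}`, the weak `l_q` norm of a finite family in `Y`. -/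
def dualBallSup (q : ℝ) {n : ℕ} (y : Fin n → Y) : ℝ :=
  ⨆ g : {g : Y →L[ℝ] ℝ // ‖g‖ ≤ 1}, (∑ i, |g.1 (y i)| ^ q) ^ (1 / q)

/-- The weak factor in the definition of `μ_p`: for `p = 1` it is
`sup_{y* ∈ B_{Y*}} max_i |y*(y_i)|`, and for `p > 1` it is the weak `l_{p*}` norm
with `p* = p/(p-1)` the conjugate exponent. -/
def weakFactor (p : ℝ) {n : ℕ} (y : Fin n → Y) : ℝ :=
  if p = 1 then ⨆ g : {g : Y →L[ℝ] ℝ // ‖g‖ ≤ 1}, ⨆ i, |g.1 (y i)|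
  else dualBallSup (p / (p - 1)) y

/-- The norm `μ_p` on molecules: the infimum over all representations
`m = Σ_i λ_i y_i m_{x_i x_i'}` of
`(Σ_i |λ_i|^p d(x_i,x_i')^p)^{1/p} · sup_{y* ∈ B_{Y*}} (Σ_i |y*(y_i)|^{p*})^{1/p*}`. -/
def muNorm (p : ℝ) (m : X →₀ Y) : ℝ :=
  sInf {c : ℝ | ∃ (n : ℕ) (lam : Fin n → ℝ) (y : Fin n → Y) (x x' : Fin n → X),
    m = ∑ i, lam i • molAtom (x i) (x' i) (y i) ∧
    c = (∑ i, |lam i| ^ p * dist (x i) (x' i) ^ p) ^ (1 / p) * weakFactor p y}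

lemma abs_apply_le' {h : Y →L[ℝ] ℝ} (hh : ‖h‖ ≤ 1) (v : Y) : |h v| ≤ ‖v‖ := by
  have := h.le_opNorm v
  rw [Real.norm_eq_abs] at this
  calc |h v| ≤ ‖h‖ * ‖v‖ := this
    _ ≤ 1 * ‖v‖ := by gcongr
    _ = ‖v‖ := one_mul _


lemma bdd_dual (q : ℝ) (hq : 0 ≤ q) {n : ℕ} (y : Fin n → Y) :
    BddAbove (Set.range fun h : {g : Y →L[ℝ] ℝ // ‖g‖ ≤ 1} =>
      (∑ i, |h.1 (y i)| ^ q) ^ (1 / q)) := by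
  refine ⟨(∑ i, ‖y i‖ ^ q) ^ (1 / q), ?_⟩
  rintro _ ⟨h, rfl⟩
  refine Real.rpow_le_rpow (Finset.sum_nonneg fun i _ =>
    Real.rpow_nonneg (abs_nonneg _) _) ?_ (by positivity)
  exact Finset.sum_le_sum fun i _ =>
    Real.rpow_le_rpow (abs_nonneg _) (abs_apply_le' h.2 (y i)) hq

lemma le_dualBallSup {q : ℝ} (hq : 0 ≤ q) {n : ℕ} (y : Fin n → Y)
    (h : {g : Y →L[ℝ] ℝ // ‖g‖ ≤ 1}) :
    (∑ i, |h.1 (y i)| ^ q) ^ (1 / q) ≤ dualBallSup q y :=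
  le_ciSup (bdd_dual q hq y) h

lemma bdd_inner {n : ℕ} (y : Fin n → Y) :
    BddAbove (Set.range fun h : {g : Y →L[ℝ] ℝ // ‖g‖ ≤ 1} => ⨆ i, |h.1 (y i)|) := by
  refine ⟨∑ i, ‖y i‖, ?_⟩
  rintro _ ⟨h, rfl⟩
  refine Real.iSup_le (fun i => ?_) (Finset.sum_nonneg fun i _ => norm_nonneg _)
  exact (abs_apply_le' h.2 (y i)).trans
    (Finset.single_le_sum (fun j _ => norm_nonneg (y j)) (Finset.mem_univ i))

lemma le_weakFactor_one {n : ℕ} (y : Fin n → Y) (h : {g : Y →L[ℝ] ℝ // ‖g‖ ≤ 1})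
    (i : Fin n) : |h.1 (y i)| ≤ weakFactor 1 y := by
  rw [weakFactor, if_pos rfl]
  exact (le_ciSup (Set.Finite.bddAbove (Set.finite_range _)) i).trans
    (le_ciSup (bdd_inner y) h)

/-- the key bound for one representation -/
lemma rep_bound (p : ℝ) (hp : 1 ≤ p) (g : Y →L[ℝ] ℝ) (f : X → ℝ) (K : ℝ≥0)
    (hf : LipschitzWith K f) {n : ℕ} (lam : Fin n → ℝ) (y : Fin n → Y)
    (x x' : Fin n → X) :
    |∑ i, lam i * ((f (x i) - f (x' i)) * g (y i))|
      ≤ ‖g‖ * K *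
        ((∑ i, |lam i| ^ p * dist (x i) (x' i) ^ p) ^ (1 / p) * weakFactor p y) := by
  classical
  -- normalized functional
  set h : Y →L[ℝ] ℝ := ‖g‖⁻¹ • g with hh
  have hh1 : ‖h‖ ≤ 1 := by
    rcases eq_or_ne g 0 with rfl | hg
    · simp [hh]
    · rw [hh]
      have : ‖‖g‖⁻¹ • g‖ = ‖(‖g‖⁻¹ : ℝ)‖ * ‖g‖ := norm_smul _ g
      rw [this, Real.norm_eq_abs, abs_inv, abs_norm,
        inv_mul_cancel₀ (norm_ne_zero_iff.mpr hg)]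
  have heq : ∀ v : Y, |g v| = ‖g‖ * |h v| := by
    intro v
    rcases eq_or_ne g 0 with rfl | hg
    · simp [hh]
    · have : (h : Y →L[ℝ] ℝ) v = ‖g‖⁻¹ * g v := rfl
      rw [this, abs_mul, abs_inv, abs_norm, ← mul_assoc,
        mul_inv_cancel₀ (norm_ne_zero_iff.mpr hg), one_mul]
  set a : Fin n → ℝ := fun i => |lam i| * dist (x i) (x' i) with ha
  set b : Fin n → ℝ := fun i => |h (y i)| with hb
  have ha0 : ∀ i, 0 ≤ a i := fun i => mul_nonneg (abs_nonneg _) dist_nonneg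
  have hb0 : ∀ i, 0 ≤ b i := fun i => abs_nonneg _
  have step1 : |∑ i, lam i * ((f (x i) - f (x' i)) * g (y i))|
      ≤ ‖g‖ * K * ∑ i, a i * b i := by
    calc |∑ i, lam i * ((f (x i) - f (x' i)) * g (y i))|
        ≤ ∑ i, |lam i * ((f (x i) - f (x' i)) * g (y i))| :=
          Finset.abs_sum_le_sum_abs _ _
      _ ≤ ∑ i, (K : ℝ) * (a i * (‖g‖ * b i)) := by
          refine Finset.sum_le_sum fun i _ => ?_
          rw [abs_mul, abs_mul, heq (y i)]
          have hlip : |f (x i) - f (x' i)| ≤ (K : ℝ) * dist (x i) (x' i) := by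
            have := hf.dist_le_mul (x i) (x' i)
            rwa [Real.dist_eq] at this
          calc |lam i| * (|f (x i) - f (x' i)| * (‖g‖ * |h (y i)|))
              ≤ |lam i| * ((K : ℝ) * dist (x i) (x' i) * (‖g‖ * |h (y i)|)) := by
                refine mul_le_mul_of_nonneg_left (mul_le_mul_of_nonneg_right hlip ?_)
                  (abs_nonneg _)
                positivity
            _ = (K : ℝ) * (a i * (‖g‖ * b i)) := by simp [ha, hb]; ring
      _ = ‖g‖ * K * ∑ i, a i * b i := by
          rw [Finset.mul_sum]
          refine Finset.sum_congr rfl fun i _ => by ring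
  refine step1.trans ?_
  rw [mul_assoc, mul_assoc]
  refine mul_le_mul_of_nonneg_left ?_ (norm_nonneg g)
  rw [← mul_assoc]
  -- reduce to: Σ a b ≤ A * W with prefactor K
  have hW0 : 0 ≤ weakFactor p y := by
    rw [weakFactor]
    split_ifs
    · exact Real.iSup_nonneg fun h' => Real.iSup_nonneg fun i => abs_nonneg _
    · exact Real.iSup_nonneg fun h' => Real.rpow_nonneg
        (Finset.sum_nonneg fun i _ => Real.rpow_nonneg (abs_nonneg _) _) _
  have key : ∑ i, a i * b i
      ≤ (∑ i, |lam i| ^ p * dist (x i) (x' i) ^ p) ^ (1 / p) * weakFactor p y := by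
    rcases eq_or_ne p 1 with rfl | hp1
    · have hb' : ∀ i, b i ≤ weakFactor 1 y := fun i => le_weakFactor_one y ⟨h, hh1⟩ i
      calc ∑ i, a i * b i ≤ ∑ i, a i * weakFactor 1 y :=
            Finset.sum_le_sum fun i _ => mul_le_mul_of_nonneg_left (hb' i) (ha0 i)
        _ = (∑ i, a i) * weakFactor 1 y := by rw [← Finset.sum_mul]
        _ = (∑ i, |lam i| ^ (1:ℝ) * dist (x i) (x' i) ^ (1:ℝ)) ^ (1 / (1:ℝ))
              * weakFactor 1 y := by
            norm_num [Real.rpow_one, ha]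
    · have hp' : 1 < p := lt_of_le_of_ne hp (Ne.symm hp1)
      have hpq : p.HolderConjugate (p / (p - 1)) := Real.HolderConjugate.conjExponent hp'
      set q := p / (p - 1) with hq
      have hq0 : 0 ≤ q := hpq.symm.nonneg
      have hold := Real.inner_le_Lp_mul_Lq Finset.univ a b hpq
      have e1 : ∑ i, |a i| ^ p = ∑ i, |lam i| ^ p * dist (x i) (x' i) ^ p := by
        refine Finset.sum_congr rfl fun i _ => ?_
        rw [abs_of_nonneg (ha0 i), ha]
        exact Real.mul_rpow (abs_nonneg _) dist_nonneg
      have e2 : (∑ i, |b i| ^ q) ^ (1 / q) ≤ weakFactor p y := by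
        have : ∀ i, |b i| = |h (y i)| := fun i => abs_abs _
        simp only [this]
        rw [weakFactor, if_neg hp1]
        exact le_dualBallSup hq0 y ⟨h, hh1⟩
      calc ∑ i, a i * b i
          ≤ (∑ i, |a i| ^ p) ^ (1 / p) * (∑ i, |b i| ^ q) ^ (1 / q) := hold
        _ ≤ (∑ i, |lam i| ^ p * dist (x i) (x' i) ^ p) ^ (1 / p) * weakFactor p y := by
            rw [e1]
            exact mul_le_mul_of_nonneg_left e2 (Real.rpow_nonneg
              (Finset.sum_nonneg fun i _ => by positivity) _)
  calc (K : ℝ) * ∑ i, a i * b i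
      ≤ (K : ℝ) * ((∑ i, |lam i| ^ p * dist (x i) (x' i) ^ p) ^ (1 / p) * weakFactor p y) :=
        mul_le_mul_of_nonneg_left key K.coe_nonneg
    _ = _ := by ring

lemma pairing_eq {n : ℕ} (f : X → ℝ) (g : Y →L[ℝ] ℝ) (lam : Fin n → ℝ)
    (y : Fin n → Y) (x x' : Fin n → X) :
    ((∑ i, lam i • molAtom (x i) (x' i) (y i) : X →₀ Y).sum fun a b => f a * g b)
      = ∑ i, lam i * ((f (x i) - f (x' i)) * g (y i)) := by
  have hΦ : ∀ m : X →₀ Y,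
      (m.sum fun a b => f a * g b) = Finsupp.lsum ℝ (fun a => f a • (g : Y →ₗ[ℝ] ℝ)) m := by
    intro m
    rw [Finsupp.lsum_apply]
    exact Finsupp.sum_congr (fun a _ => by simp)
  rw [hΦ, map_sum]
  refine Finset.sum_congr rfl fun i _ => ?_
  rw [map_smul, molAtom, map_sub]
  simp only [Finsupp.lsum_single, LinearMap.smul_apply, ContinuousLinearMap.coe_coe,
    smul_eq_mul]
  ring


lemma exists_rep (x0 : X) (m : X →₀ Y)
    (hm : (m.sum fun _ v => v) = 0) :
    ∃ (n : ℕ) (lam : Fin n → ℝ) (y : Fin n → Y) (x x' : Fin n → X),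
      m = ∑ i, lam i • molAtom (x i) (x' i) (y i) := by
  classical
  have hsum : ∑ a ∈ m.support, m a = 0 := hm
  set e := m.support.equivFin with he
  refine ⟨m.support.card, fun _ => 1, fun i => m (e.symm i : X),
    fun i => (e.symm i : X), fun _ => x0, ?_⟩
  have h1 : ∑ i, Finsupp.single ((e.symm i : X)) (m ((e.symm i : X))) = m := by
    rw [Equiv.sum_comp e.symm (fun a : m.support => Finsupp.single (a : X) (m (a : X)))]
    rw [Finset.sum_coe_sort m.support (fun a => Finsupp.single a (m a))]
    exact Finsupp.sum_single m
  have h2 : ∑ i, Finsupp.single x0 (m ((e.symm i : X))) = (0 : X →₀ Y) := by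
    have hs : ∀ v : Y, Finsupp.single x0 v = Finsupp.singleAddHom (M := Y) x0 v := fun _ => rfl
    simp only [hs]
    rw [← map_sum (Finsupp.singleAddHom x0 : Y →+ (X →₀ Y)) _ Finset.univ]
    have : ∑ i, m ((e.symm i : X)) = 0 := by
      rw [Equiv.sum_comp e.symm (fun a : m.support => m (a : X))]
      rw [Finset.sum_coe_sort m.support (fun a => m a)]
      exact hsum
    simp [this]
  simp only [one_smul, molAtom, Finset.sum_sub_distrib, h1, h2, sub_zero]

/-- For every `y* ∈ Y*`, every Lipschitz `f : X → ℝ` vanishing at the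
base point, and every molecule `m`, `|Σ_x f(x)·y*(m(x))| ≤ ‖y*‖ · Lip(f) · μ_p(m)`. -/
theorem pairing_le_muNorm [CompleteSpace Y] (x0 : X) (p : ℝ) (hp : 1 ≤ p)
    (g : Y →L[ℝ] ℝ) (f : X → ℝ) (K : ℝ≥0) (hf : LipschitzWith K f) (hf0 : f x0 = 0)
    (m : X →₀ Y) (hm : m ∈ MolSpace X Y) :
    |m.sum fun x y => f x * g y| ≤ ‖g‖ * K * muNorm p m := by
  classical
  set S : Set ℝ := {c : ℝ | ∃ (n : ℕ) (lam : Fin n → ℝ) (y : Fin n → Y) (x x' : Fin n → X),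
    m = ∑ i, lam i • molAtom (x i) (x' i) (y i) ∧
    c = (∑ i, |lam i| ^ p * dist (x i) (x' i) ^ p) ^ (1 / p) * weakFactor p y} with hS
  have hmu : muNorm p m = sInf S := rfl
  have hm' : (m.sum fun _ v => v) = 0 := by
    have := hm; simp [MolSpace, LinearMap.mem_ker, Finsupp.lsum_apply] at this; exact this
  obtain ⟨n0, lam0, y0, xx0, xx0', hrep0⟩ := exists_rep x0 m hm'
  have hne : S.Nonempty :=
    ⟨_, n0, lam0, y0, xx0, xx0', hrep0, rfl⟩
  have hbound : ∀ c ∈ S, |m.sum fun a b => f a * g b| ≤ (‖g‖ * K) * c := by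
    rintro c ⟨n, lam, y, x, x', hrep, rfl⟩
    rw [hrep, pairing_eq]
    have := rep_bound p hp g f K hf lam y x x'
    calc |∑ i, lam i * ((f (x i) - f (x' i)) * g (y i))|
        ≤ ‖g‖ * K * ((∑ i, |lam i| ^ p * dist (x i) (x' i) ^ p) ^ (1 / p)
            * weakFactor p y) := this
      _ = _ := by ring
  rw [hmu]
  rcases eq_or_lt_of_le (mul_nonneg (norm_nonneg g) K.coe_nonneg :
      (0:ℝ) ≤ ‖g‖ * K) with hG | hG
  · obtain ⟨c, hc⟩ := hne
    have := hbound c hc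
    rw [← hG] at this ⊢
    simpa using this
  · have hinf : |m.sum fun a b => f a * g b| / (‖g‖ * K) ≤ sInf S := by
      refine le_csInf hne fun c hc => ?_
      rw [div_le_iff₀ hG] at *
      calc |m.sum fun a b => f a * g b| ≤ (‖g‖ * K) * c := hbound c hc
        _ = c * (‖g‖ * ↑K) := by ring
    rw [div_le_iff₀ hG] at hinf
    calc |m.sum fun a b => f a * g b| ≤ sInf S * (‖g‖ * ↑K) := hinf
      _ = ‖g‖ * ↑K * sInf S := by ring

end
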